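/- Let p be a prime, K a field of characteristic p, t ∈ K, and φ(X) = tX + c_1X^p + ⋯ + c_DX^{p^D} ∈ K[X] with D ≥ 1 and c_D ≠ 0 (a Drinfeld module of generic characteristic). Let |·|_v be a nonarchimedean absolute value on K such that (i) |P(t)|_v = 1 for every nonzero polynomial P ∈ 𝔽_p[X] (so every nonzero element of 𝔽_p[t] ⊆ K is a v-adic unit), and (ii) |c_i|_v ≤ 1 for all 1 ≤ i ≤ D. Let Γ ⊆ K be the Φ(R)-submodule generated by finitely many elements x_1, …, x_r ∈ K with |x_j|_v ≤ 1 for each j. Then Γ is discrete with respect to |·|_v: there exists ε > 0 such that every γ ∈ Γ with |γ|_v < ε equals 0. -/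

import Mathlib

/-- The `𝔽_p`-linear map `T_φ : K → K` induced by the additive polynomial
`φ(X) = tX + c₁X^p + ⋯ + c_D X^{p^D}` of a Drinfeld module of generic characteristic. -/
noncomputable def genericTphi {K : Type*} [Field K] (p D : ℕ) (t : K) (c : ℕ → K) :
    K → K :=
  fun x => t * x + ∑ i ∈ Finset.Icc 1 D, c i * x ^ (p ^ i)

section Aux

open Polynomial Module

variable {K : Type*} [Field K]

/-- nonarchimedean bound for finite sums -/
private lemma nonarch_sum_le (v : AbsoluteValue K ℝ)
    (hna : IsNonarchimedean (v : K → ℝ)) {ι : Type*} (s : Finset ι) (f : ι → K)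
    {M : ℝ} (hM : 0 ≤ M) (h : ∀ i ∈ s, v (f i) ≤ M) : v (∑ i ∈ s, f i) ≤ M := by
  classical
  revert h
  refine Finset.cons_induction_on s (fun _ => by simpa using hM) (fun i s hi ih h => ?_)
  rw [Finset.sum_cons]
  exact le_trans (hna _ _) (max_le (h i (Finset.mem_cons_self i s))
    (ih fun j hj => h j (Finset.mem_cons_of_mem hj)))

private lemma nonarch_add_eq (v : AbsoluteValue K ℝ)
    (hna : IsNonarchimedean (v : K → ℝ)) {x y : K} (h : v y < v x) :
    v (x + y) = v x := by
  refine le_antisymm (le_trans (hna _ _) (by rw [max_eq_left h.le])) (le_of_not_gt fun hlt => ?_)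
  have h1 : v x = v ((x + y) + (-y)) := by rw [add_neg_cancel_right]
  have h2 : v x ≤ max (v (x + y)) (v y) := by
    rw [h1]; exact le_trans (hna _ _) (by rw [v.map_neg])
  exact lt_irrefl _ (lt_of_le_of_lt h2 (max_lt hlt h))

private lemma nonarch_sub_le (v : AbsoluteValue K ℝ)
    (hna : IsNonarchimedean (v : K → ℝ)) (x y : K) :
    v (x - y) ≤ max (v x) (v y) := by
  rw [sub_eq_add_neg]
  exact le_trans (hna _ _) (by rw [v.map_neg])

end Aux

open Polynomial Module

/-- For a Drinfeld module of generic characteristic defined over a field `K`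
of characteristic `p`, and a nonarchimedean absolute value `v` on `K` at which every nonzero
element of `𝔽_p[t]` is a unit and all coefficients of `φ` are integral, every finitely
generated `Φ(R)`-submodule `Γ ⊆ K` generated by `v`-integral elements is `v`-adically
discrete. -/
theorem stmt1 {K : Type*} [Field K] (p : ℕ) [Fact p.Prime] [CharP K p]
    (t : K) (D : ℕ) (hD : 1 ≤ D) (c : ℕ → K) (hcD : c D ≠ 0)
    (v : AbsoluteValue K ℝ) (hna : IsNonarchimedean (v : K → ℝ))
    (hunit : ∀ P : Polynomial (ZMod p), P ≠ 0 →
      v (Polynomial.eval₂ (ZMod.castHom (dvd_refl p) K) t P) = 1)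
    (hint : ∀ i, 1 ≤ i → i ≤ D → v (c i) ≤ 1)
    (r : ℕ) (xs : Fin r → K) (hxs : ∀ j, v (xs j) ≤ 1)
    (Γ : AddSubgroup K)
    -- `Γ` is a `Φ(R)`-submodule:
    (hΓmod : ∀ y ∈ Γ, genericTphi p D t c y ∈ Γ)
    -- `Γ` contains the generators:
    (hgen : ∀ j, xs j ∈ Γ)
    -- `Γ` is the smallest such submodule, i.e. it is generated by `x₁, …, x_r`:
    (hmin : ∀ Γ' : AddSubgroup K, (∀ y ∈ Γ', genericTphi p D t c y ∈ Γ') →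
      (∀ j, xs j ∈ Γ') → Γ ≤ Γ') :
    ∃ ε : ℝ, 0 < ε ∧ ∀ γ ∈ Γ, v γ < ε → γ = 0 := by
  classical
  have hp : p.Prime := Fact.out
  haveI : Fact (1 < p) := ⟨hp.one_lt⟩
  set T : K → K := genericTphi p D t c with hTdef
  -- basic valuation facts
  have hvt : v t = 1 := by
    have h := hunit X X_ne_zero
    rwa [eval₂_X] at h
  have hvcast : ∀ z : ZMod p, v (ZMod.castHom (dvd_refl p) K z) ≤ 1 := by
    intro z
    rcases eq_or_ne z 0 with rfl | hz
    · simp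
    · have h := hunit (C z) (by simpa using hz)
      rw [eval₂_C] at h
      exact le_of_eq h
  have hvint : ∀ n : ℤ, v ((n : K)) ≤ 1 := by
    intro n
    rw [← map_intCast (ZMod.castHom (dvd_refl p) K) n]
    exact hvcast _
  -- additivity of T
  have hTadd : ∀ x y : K, T (x + y) = T x + T y := by
    intro x y
    simp only [hTdef, genericTphi]
    rw [Finset.sum_congr rfl (fun i _ => by rw [add_pow_char_pow, mul_add]),
      Finset.sum_add_distrib]
    ring
  -- elementary bounds on T
  have hvT : ∀ x : K, v x ≤ 1 → v (T x) ≤ v x := by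
    intro x hx
    have h1 : v (T x) ≤ max (v (t * x)) (v (∑ i ∈ Finset.Icc 1 D, c i * x ^ (p ^ i))) := hna _ _
    refine le_trans h1 (max_le (by rw [v.map_mul, hvt, one_mul]) ?_)
    refine nonarch_sum_le v hna _ _ (v.nonneg x) ?_
    intro i hi
    rw [Finset.mem_Icc] at hi
    rw [v.map_mul, v.map_pow]
    calc v (c i) * v x ^ p ^ i ≤ 1 * v x ^ p ^ i :=
          mul_le_mul_of_nonneg_right (hint i hi.1 hi.2) (by positivity)
      _ = v x ^ p ^ i := one_mul _
      _ ≤ v x ^ 1 := pow_le_pow_of_le_one (v.nonneg x) hx (Nat.one_le_pow _ _ hp.pos)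
      _ = v x := pow_one _
  have hvTiter : ∀ x : K, v x ≤ 1 → ∀ j : ℕ, v (T^[j] x) ≤ v x := by
    intro x hx j
    induction j with
    | zero => simp
    | succ j ih =>
        rw [Function.iterate_succ_apply']
        exact le_trans (hvT _ (le_trans ih hx)) ih
  have hvTdiff : ∀ x : K, v x ≤ 1 → ∀ j : ℕ, v (T^[j] x - t ^ j * x) ≤ (v x) ^ p := by
    intro x hx j
    induction j with
    | zero => simpa using pow_nonneg (v.nonneg x) p
    | succ j ih =>
        have key : T^[j + 1] x - t ^ (j + 1) * x
            = t * (T^[j] x - t ^ j * x) + ∑ i ∈ Finset.Icc 1 D, c i * (T^[j] x) ^ (p ^ i) := by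
          rw [Function.iterate_succ_apply']
          simp only [hTdef, genericTphi]
          ring
        rw [key]
        refine le_trans (hna _ _) (max_le ?_ ?_)
        · rw [v.map_mul, hvt, one_mul]; exact ih
        · refine nonarch_sum_le v hna _ _ (pow_nonneg (v.nonneg x) p) ?_
          intro i hi
          rw [Finset.mem_Icc] at hi
          rw [v.map_mul, v.map_pow]
          have hple : p ≤ p ^ i := by
            calc p = p ^ 1 := (pow_one p).symm
              _ ≤ p ^ i := Nat.pow_le_pow_right hp.pos hi.1
          calc v (c i) * v (T^[j] x) ^ p ^ i ≤ 1 * v (T^[j] x) ^ p ^ i :=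
                mul_le_mul_of_nonneg_right (hint i hi.1 hi.2) (by positivity)
            _ = v (T^[j] x) ^ p ^ i := one_mul _
            _ ≤ v x ^ p ^ i := pow_le_pow_left₀ (v.nonneg _) (hvTiter x hx j) _
            _ ≤ v x ^ p := pow_le_pow_of_le_one (v.nonneg x) hx hple
  -- the ℤ-linear map T and the ℤ[X]-module structure
  set Tl : K →ₗ[ℤ] K := (AddMonoidHom.mk' T hTadd).toIntLinearMap with hTl
  have hTlcoe : ∀ x : K, Tl x = T x := fun _ => rfl
  set ι : K ≃ₗ[ℤ] Module.AEval' Tl := Module.AEval'.of Tl with hι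
  set aev : ℤ[X] → K → K := fun a x => Polynomial.aeval Tl a x with haev
  have haev_sum : ∀ (a : ℤ[X]) (x : K),
      aev a x = ∑ n ∈ a.support, a.coeff n • T^[n] x := by
    intro a x
    show Polynomial.aeval Tl a x = _
    rw [aeval_endomorphism, Polynomial.sum_def]
    refine Finset.sum_congr rfl fun n _ => ?_
    rw [Module.End.pow_apply]
    rfl
  have hsmulι : ∀ (a : ℤ[X]) (x : K), a • ι x = ι (aev a x) := by
    intro a x
    apply ι.symm.injective
    rfl
  have hsym : ∀ (a : ℤ[X]) (m : Module.AEval' Tl),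
      ι.symm (a • m) = aev a (ι.symm m) := by
    intro a m
    rfl
  -- bounds for the action
  have haev_le : ∀ (a : ℤ[X]) (x : K), v x ≤ 1 → v (aev a x) ≤ v x := by
    intro a x hx
    rw [haev_sum]
    refine nonarch_sum_le v hna _ _ (v.nonneg x) ?_
    intro n _
    rw [zsmul_eq_mul, v.map_mul]
    calc v ((a.coeff n : K)) * v (T^[n] x) ≤ 1 * v x :=
          mul_le_mul (hvint _) (hvTiter x hx n) (v.nonneg _) zero_le_one
      _ = v x := one_mul _
  have haev_diff : ∀ (a : ℤ[X]) (x : K), v x ≤ 1 →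
      v (aev a x - Polynomial.eval₂ (Int.castRingHom K) t a * x) ≤ (v x) ^ p := by
    intro a x hx
    have hrepr : aev a x - Polynomial.eval₂ (Int.castRingHom K) t a * x
        = ∑ n ∈ a.support, (a.coeff n : K) * (T^[n] x - t ^ n * x) := by
      rw [haev_sum, Polynomial.eval₂_eq_sum, Polynomial.sum_def, Finset.sum_mul,
        ← Finset.sum_sub_distrib]
      refine Finset.sum_congr rfl fun n _ => ?_
      rw [zsmul_eq_mul]
      simp only [eq_intCast]
      ring
    rw [hrepr]
    refine nonarch_sum_le v hna _ _ (pow_nonneg (v.nonneg x) p) ?_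
    intro n _
    rw [v.map_mul]
    calc v ((a.coeff n : K)) * v (T^[n] x - t ^ n * x) ≤ 1 * (v x) ^ p :=
          mul_le_mul (hvint _) (hvTdiff x hx n) (v.nonneg _) zero_le_one
      _ = (v x) ^ p := one_mul _
  -- relating integer evaluation with the ZMod p one
  have hmapeval : ∀ a : ℤ[X],
      Polynomial.eval₂ (ZMod.castHom (dvd_refl p) K) t (a.map (Int.castRingHom (ZMod p)))
        = Polynomial.eval₂ (Int.castRingHom K) t a := by
    intro a
    rw [Polynomial.eval₂_map]
    congr 1
    exact RingHom.ext_int _ _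
  -- key exact-value lemma
  have hkey : ∀ (a : ℤ[X]) (x : K), v x < 1 →
      a.map (Int.castRingHom (ZMod p)) ≠ 0 → v (aev a x) = v x := by
    intro a x hx ha
    rcases eq_or_ne x 0 with rfl | hx0
    · have : aev a (0 : K) = 0 := by rw [haev]; exact map_zero (Polynomial.aeval Tl a)
      rw [this]
    · have hx1 : v x ≤ 1 := hx.le
      have hpos : 0 < v x := v.pos hx0
      have hα : v (Polynomial.eval₂ (Int.castRingHom K) t a) = 1 := by
        rw [← hmapeval]; exact hunit _ ha
      have hlt : (v x) ^ p < v x := by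
        calc (v x) ^ p < (v x) ^ 1 := pow_lt_pow_right_of_lt_one₀ hpos hx hp.one_lt
          _ = v x := pow_one _
    -- decompose
      have heq : aev a x = Polynomial.eval₂ (Int.castRingHom K) t a * x
          + (aev a x - Polynomial.eval₂ (Int.castRingHom K) t a * x) := by ring
      have hvmul : v (Polynomial.eval₂ (Int.castRingHom K) t a * x) = v x := by
        rw [v.map_mul, hα, one_mul]
      rw [heq, nonarch_add_eq v hna (by rw [hvmul]; exact lt_of_le_of_lt (haev_diff a x hx1) hlt),
        hvmul]
  -- zero action when reduction vanishes
  have hzeroact : ∀ a : ℤ[X], a.map (Int.castRingHom (ZMod p)) = 0 → ∀ x : K, aev a x = 0 := by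
    intro a ha x
    rw [haev_sum]
    refine Finset.sum_eq_zero fun n _ => ?_
    have hz : ((a.coeff n : ℤ) : ZMod p) = 0 := by
      have := congrArg (fun q => Polynomial.coeff q n) ha
      simpa [Polynomial.coeff_map] using this
    have hK : ((a.coeff n : ℤ) : K) = 0 := by
      rw [← map_intCast (ZMod.castHom (dvd_refl p) K) (a.coeff n), hz, map_zero]
    rw [zsmul_eq_mul, hK, zero_mul]
  -- Γ is closed under the whole polynomial action
  have hΓaev : ∀ a : ℤ[X], ∀ y ∈ Γ, aev a y ∈ Γ := by
    intro a
    induction a using Polynomial.induction_on with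
    | C n =>
        intro y hy
        have : aev (C n) y = n • y := by
          rw [haev]
          show Polynomial.aeval Tl (C n) y = n • y
          rw [aeval_C]
          exact Module.algebraMap_end_apply ℤ ℤ K n y
        rw [this]
        exact AddSubgroup.zsmul_mem Γ hy n
    | add f g hf hg =>
        intro y hy
        have : aev (f + g) y = aev f y + aev g y := by
          rw [haev]
          show Polynomial.aeval Tl (f + g) y = _
          rw [map_add]
          rfl
        rw [this]
        exact Γ.add_mem (hf y hy) (hg y hy)
    | monomial n b ih =>
        intro y hy
        have : aev (C b * X ^ (n + 1)) y = aev (C b * X ^ n) (T y) := by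
          rw [haev]
          show Polynomial.aeval Tl (C b * X ^ (n + 1)) y = _
          rw [pow_succ, ← mul_assoc, map_mul, aeval_X, Module.End.mul_apply]
          rfl
        rw [this]
        exact ih (T y) (hΓmod y hy)
  -- the span submodule
  set N : Submodule ℤ[X] (Module.AEval' Tl) :=
    Submodule.span ℤ[X] (Set.range fun j => ι (xs j)) with hN
  -- Γ corresponds exactly to N
  have hNsubΓ : ∀ m : Module.AEval' Tl, m ∈ N → ι.symm m ∈ Γ := by
    have hle : N ≤ {
        carrier := (fun x => ι x) '' (Γ : Set K)
        add_mem' := by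
          rintro x y ⟨y1, h1, rfl⟩ ⟨y2, h2, rfl⟩
          exact ⟨y1 + y2, Γ.add_mem h1 h2, map_add ι _ _⟩
        zero_mem' := ⟨0, Γ.zero_mem, map_zero ι⟩
        smul_mem' := by
          rintro a x ⟨y, hy, rfl⟩
          exact ⟨aev a y, hΓaev a y hy, (hsmulι a y).symm⟩ } := by
      rw [hN]
      refine Submodule.span_le.mpr ?_
      rintro m ⟨j, rfl⟩
      exact ⟨xs j, hgen j, rfl⟩
    intro m hm
    obtain ⟨y, hy, hrfl⟩ := hle hm
    rw [← hrfl, LinearEquiv.symm_apply_apply]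
    exact hy
  have hΓsubN : ∀ x : K, x ∈ Γ → ι x ∈ N := by
    have hΓ' : Γ ≤ {
        carrier := {y : K | ι y ∈ N}
        add_mem' := by
          intro a b ha hb
          simpa only [Set.mem_setOf_eq, map_add] using N.add_mem (show ι a ∈ N from ha) (show ι b ∈ N from hb)
        zero_mem' := by
          simpa only [Set.mem_setOf_eq, map_zero] using N.zero_mem
        neg_mem' := by
          intro a ha
          simpa only [Set.mem_setOf_eq, map_neg] using N.neg_mem (show ι a ∈ N from ha) } := by
      refine hmin _ ?_ ?_
      · intro y hy
        simp only [AddSubgroup.mem_mk, Set.mem_setOf_eq] at hy ⊢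
        have hX : ι (genericTphi p D t c y) = (X : ℤ[X]) • ι y := by
          rw [hsmulι]
          congr 1
          show genericTphi p D t c y = Polynomial.aeval Tl X y
          rw [aeval_X]
          rfl
        show ι (genericTphi p D t c y) ∈ N
        rw [hX]
        exact N.smul_mem _ (show ι y ∈ N from hy)
      · intro j
        simp only [AddSubgroup.mem_mk, Set.mem_setOf_eq]
        exact (Submodule.subset_span ⟨j, rfl⟩ : ι (xs j) ∈ N)
    intro x hx
    exact hΓ' hx
  -- the "small elements" submodule
  set Mm : Submodule ℤ[X] (Module.AEval' Tl) := {
      carrier := {m : Module.AEval' Tl | v (ι.symm m) < 1}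
      add_mem' := by
        intro x y hx hy
        simp only [Set.mem_setOf_eq, map_add] at *
        exact lt_of_le_of_lt (hna _ _) (max_lt hx hy)
      zero_mem' := by simp only [Set.mem_setOf_eq, map_zero]; simpa using one_pos
      smul_mem' := by
        intro a m hm
        simp only [Set.mem_setOf_eq] at *
        rw [hsym]
        exact lt_of_le_of_lt (haev_le a _ hm.le) hm } with hMm
  have hMm_mem : ∀ m : Module.AEval' Tl, m ∈ Mm ↔ v (ι.symm m) < 1 := fun m => Iff.rfl
  -- finite generation of N ⊓ Mm
  have hNfg : N.FG := Submodule.fg_span (Set.finite_range _)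
  haveI hNoeth : IsNoetherian ℤ[X] N := isNoetherian_of_fg_of_noetherian N hNfg
  have hPfg : (N ⊓ Mm).FG := by
    have h1 : Submodule.map N.subtype (Submodule.comap N.subtype Mm) = N ⊓ Mm :=
      Submodule.map_comap_subtype N Mm
    rw [← h1]
    exact Submodule.FG.map _ (IsNoetherian.noetherian _)
  obtain ⟨S, hS⟩ := hPfg
  -- discreteness for spans of finite subsets of N ⊓ Mm
  have lemC : ∀ S' : Finset (Module.AEval' Tl),
      Submodule.span ℤ[X] (S' : Set (Module.AEval' Tl)) ≤ N ⊓ Mm →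
      ∃ ε : ℝ, 0 < ε ∧ ∀ m ∈ Submodule.span ℤ[X] (S' : Set (Module.AEval' Tl)),
        v (ι.symm m) < ε → m = 0 := by
    intro S'
    induction S' using Finset.induction_on with
    | empty =>
        intro _
        refine ⟨1, one_pos, ?_⟩
        intro m hm _
        simpa [Submodule.mem_bot] using (by simpa [Submodule.span_empty] using hm :
          m ∈ (⊥ : Submodule ℤ[X] (Module.AEval' Tl)))
    | @insert y S' hyS ih =>
        intro hle
        have hle' : Submodule.span ℤ[X] (S' : Set (Module.AEval' Tl)) ≤ N ⊓ Mm :=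
          le_trans (Submodule.span_mono (by rw [Finset.coe_insert]; exact Set.subset_insert _ _))
            hle
        obtain ⟨ε', hε', hih⟩ := ih hle'
        by_contra hcon
        push_neg at hcon
        obtain ⟨m1, hm1s, hm1v, hm1ne⟩ := hcon ε' hε'
        have hm1sym : ι.symm m1 ≠ 0 := fun h => hm1ne (ι.symm.map_eq_zero_iff.mp h)
        have hm1pos : 0 < v (ι.symm m1) := v.pos hm1sym
        obtain ⟨m2, hm2s, hm2v, hm2ne⟩ := hcon (min ε' (v (ι.symm m1))) (lt_min hε' hm1pos)
        rw [lt_min_iff] at hm2v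
        have hm1m : m1 ∈ Mm := (hle hm1s).2
        have hm2m : m2 ∈ Mm := (hle hm2s).2
        rw [Finset.coe_insert, Submodule.mem_span_insert] at hm1s hm2s
        obtain ⟨a1, x1, hx1, hm1eq⟩ := hm1s
        obtain ⟨a2, x2, hx2, hm2eq⟩ := hm2s
        have hsmul_le : ∀ (a : ℤ[X]) (m : Module.AEval' Tl), m ∈ Mm →
            v (ι.symm (a • m)) ≤ v (ι.symm m) := by
          intro a m hm
          rw [hsym]
          exact haev_le a _ (le_of_lt ((hMm_mem m).mp hm))
        have hsmul_eq : ∀ (a : ℤ[X]) (m : Module.AEval' Tl), m ∈ Mm → a • m ≠ 0 →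
            v (ι.symm (a • m)) = v (ι.symm m) := by
          intro a m hm hne
          rw [hsym]
          refine hkey a _ ((hMm_mem m).mp hm) (fun hmap => hne ?_)
          apply ι.symm.injective
          rw [map_zero, hsym]
          exact hzeroact a hmap _
        set z : Module.AEval' Tl := a2 • m1 - a1 • m2 with hz
        have hzspan : z ∈ Submodule.span ℤ[X] (S' : Set (Module.AEval' Tl)) := by
          have hzz : z = a2 • x1 - a1 • x2 := by
            rw [hz, hm1eq, hm2eq, smul_add, smul_add, smul_smul, smul_smul, mul_comm a2 a1]
            abel
          rw [hzz]
          exact sub_mem (Submodule.smul_mem _ _ hx1) (Submodule.smul_mem _ _ hx2)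
        have hzv : v (ι.symm z) < ε' := by
          rw [hz, map_sub]
          refine lt_of_le_of_lt (nonarch_sub_le v hna _ _) (max_lt ?_ ?_)
          · exact lt_of_le_of_lt (hsmul_le a2 m1 hm1m) hm1v
          · exact lt_of_le_of_lt (hsmul_le a1 m2 hm2m) (lt_trans hm2v.2 hm1v)
        have hz0 : z = 0 := hih z hzspan hzv
        have heq2 : a2 • m1 = a1 • m2 := sub_eq_zero.mp (hz ▸ hz0)
        by_cases h12 : a1 • m2 = 0
        · have hmap0 : a1.map (Int.castRingHom (ZMod p)) = 0 := by
            by_contra hmap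
            have hval := hkey a1 (ι.symm m2) ((hMm_mem m2).mp hm2m) hmap
            have h0 : aev a1 (ι.symm m2) = 0 := by
              rw [← hsym, h12, map_zero]
            rw [h0, v.map_zero] at hval
            have hm2sym : ι.symm m2 ≠ 0 := fun h => hm2ne (ι.symm.map_eq_zero_iff.mp h)
            exact (v.pos hm2sym).ne hval
          have hy0 : a1 • y = 0 := by
            apply ι.symm.injective
            rw [map_zero, hsym]
            exact hzeroact a1 hmap0 _
          have hm1x : m1 = x1 := by rw [hm1eq, hy0, zero_add]
          exact hm1ne (hih m1 (hm1x ▸ hx1) hm1v)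
        · have e1 : v (ι.symm (a1 • m2)) = v (ι.symm m2) := hsmul_eq a1 m2 hm2m h12
          have h21 : a2 • m1 ≠ 0 := by rw [heq2]; exact h12
          have e2 : v (ι.symm (a2 • m1)) = v (ι.symm m1) := hsmul_eq a2 m1 hm1m h21
          rw [heq2, e1] at e2
          exact absurd e2 (ne_of_lt hm2v.2)
  obtain ⟨ε, hε, hdisc⟩ := lemC S (le_of_eq hS)
  refine ⟨min ε 1, lt_min hε one_pos, ?_⟩
  intro γ hγ hγv
  rw [lt_min_iff] at hγv
  have hγN : ι γ ∈ N := hΓsubN γ hγ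
  have hγm : ι γ ∈ Mm := by
    rw [hMm_mem, LinearEquiv.symm_apply_apply]
    exact hγv.2
  have hγspan : ι γ ∈ Submodule.span ℤ[X] (S : Set (Module.AEval' Tl)) := by
    rw [hS]
    exact Submodule.mem_inf.mpr ⟨hγN, hγm⟩
  have h0 := hdisc (ι γ) hγspan (by rw [LinearEquiv.symm_apply_apply]; exact hγv.1)
  exact ι.map_eq_zero_iff.mp h0
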